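/- For each n ≥ 1 and k ≥ 1 there is a finite k-graph whose topological realisation is homeomorphic to a wedge of n k-spheres, that is, to the quotient of the disjoint union of n copies of the k-sphere S^k obtained by identifying one chosen point from each copy to a single point. -/

import Mathlib

/-- A `k`-graph structure on a type `M` of morphisms: a countable small category whose
objects are identified with the identity morphisms (`r μ`, `s μ` are the identity
morphisms at the codomain/domain of `μ`), equipped with a degree functor
`d : M → ℕ^k` satisfying the unique factorisation property. -/
structure KGraphOn (k : ℕ) (M : Type) where
  countable : Countable M
  d : M → Fin k → ℕ
  r : M → M
  s : M → M
  comp : (μ ν : M) → s μ = r ν → M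
  d_r : ∀ μ, d (r μ) = 0
  d_s : ∀ μ, d (s μ) = 0
  s_r : ∀ μ, s (r μ) = r μ
  r_r : ∀ μ, r (r μ) = r μ
  r_s : ∀ μ, r (s μ) = s μ
  s_s : ∀ μ, s (s μ) = s μ
  r_comp : ∀ μ ν h, r (comp μ ν h) = r μ
  s_comp : ∀ μ ν h, s (comp μ ν h) = s ν
  d_comp : ∀ μ ν h, d (comp μ ν h) = d μ + d ν
  id_comp : ∀ μ, comp (r μ) μ (s_r μ) = μ
  comp_id : ∀ μ, comp μ (s μ) ((r_s μ).symm) = μ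
  assoc : ∀ μ ν ρ (h₁ : s μ = r ν) (h₂ : s ν = r ρ),
    comp (comp μ ν h₁) ρ ((s_comp μ ν h₁).trans h₂)
      = comp μ (comp ν ρ h₂) (h₁.trans (r_comp ν ρ h₂).symm)
  factor : ∀ (m n : Fin k → ℕ) (lam : M), d lam = m + n →
    ∃! p : M × M, ∃ h : s p.1 = r p.2, d p.1 = m ∧ d p.2 = n ∧ comp p.1 p.2 h = lam

open Classical

namespace KGraphOn

variable {k : ℕ} {M : Type}

/-- The first/second factor of `lam` in its factorisation with first factor of degree `m`. -/
noncomputable def split (S : KGraphOn k M) (lam : M) (m : Fin k → ℕ) : M × M :=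
  if h : ∃ p : M × M, ∃ hc : S.s p.1 = S.r p.2, S.d p.1 = m ∧ S.comp p.1 p.2 hc = lam
  then h.choose else (lam, lam)

/-- The middle factor `lam(m, n)` of `lam = α β γ` with `d α = m`, `d β = n - m`. -/
noncomputable def seg (S : KGraphOn k M) (lam : M) (m n : Fin k → ℕ) : M :=
  (S.split (S.split lam m).2 (n - m)).1

end KGraphOn

/-- The closed interval `[0, m] ⊆ ℝ^k`. -/
def cube (k : ℕ) (m : Fin k → ℕ) : Set (Fin k → ℝ) :=
  Set.Icc 0 (fun i => (m i : ℝ))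

/-- The relation defining the topological realisation:
`(μ, s) ∼ (ν, t)` iff `μ(⌊s⌋, ⌈s⌉) = ν(⌊t⌋, ⌈t⌉)` and `s - ⌊s⌋ = t - ⌊t⌋`. -/
noncomputable def realRel {k : ℕ} {M : Type} (S : KGraphOn k M) :
    (Σ lam : M, ↥(cube k (S.d lam))) → (Σ lam : M, ↥(cube k (S.d lam))) → Prop :=
  fun x y =>
    S.seg x.1 (fun i => ⌊x.2.1 i⌋₊) (fun i => ⌈x.2.1 i⌉₊)
      = S.seg y.1 (fun i => ⌊y.2.1 i⌋₊) (fun i => ⌈y.2.1 i⌉₊)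
    ∧ (fun i => x.2.1 i - (⌊x.2.1 i⌋₊ : ℝ)) = (fun i => y.2.1 i - (⌊y.2.1 i⌋₊ : ℝ))

noncomputable def realSetoid {k : ℕ} {M : Type} (S : KGraphOn k M) :
    Setoid (Σ lam : M, ↥(cube k (S.d lam))) :=
  ⟨realRel S, ⟨fun _ => ⟨rfl, rfl⟩, fun h => ⟨h.1.symm, h.2.symm⟩,
    fun h h' => ⟨h.1.trans h'.1, h.2.trans h'.2⟩⟩⟩

/-- The topological realisation `X_Λ` of a `k`-graph. -/
noncomputable def Realisation {k : ℕ} {M : Type} (S : KGraphOn k M) : Type :=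
  Quotient (realSetoid S)

noncomputable instance {k : ℕ} {M : Type} (S : KGraphOn k M) :
    TopologicalSpace (Realisation S) :=
  instTopologicalSpaceQuotient


/-- The relation on `n` disjoint copies of the `k`-sphere identifying the chosen
points `p i` (one in each copy) with one another. -/
def wedgeRel (n k : ℕ)
    (p : Fin n → Metric.sphere (0 : EuclideanSpace ℝ (Fin (k + 1))) 1) :
    (Fin n × Metric.sphere (0 : EuclideanSpace ℝ (Fin (k + 1))) 1) →
      (Fin n × Metric.sphere (0 : EuclideanSpace ℝ (Fin (k + 1))) 1) → Prop :=
  fun x y => x = y ∨ (x.2 = p x.1 ∧ y.2 = p y.1)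


namespace Wedge

inductive TT : Type
  | s0 | s1 | s2 | e0 | e2
deriving DecidableEq

instance : Fintype TT :=
  ⟨{TT.s0, TT.s1, TT.s2, TT.e0, TT.e2}, fun x => by cases x <;> decide⟩

open TT

def degT : TT → ℕ
  | e0 => 1 | e2 => 1 | _ => 0

def srcT : TT → TT
  | e0 => s1 | e2 => s1 | t => t

def rngT : TT → TT
  | e0 => s0 | e2 => s2 | t => t

def compT : TT → TT → TT
  | _, e0 => e0
  | _, e2 => e2
  | a, _ => a

def initT (t : TT) (nj : ℕ) : TT := if nj = 0 then srcT t else t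
def finT (t : TT) (mj : ℕ) : TT := if mj = 0 then rngT t else t

def Bd (t : TT) : Prop := t = s0 ∨ t = s2

instance : DecidablePred Bd := fun t => by unfold Bd; infer_instance

-- TT-level lemmas
lemma L1 : ∀ a b : TT, srcT a = rngT b → rngT (compT a b) = rngT a := by decide
lemma L2 : ∀ a b : TT, srcT a = rngT b → srcT (compT a b) = srcT b := by decide
lemma L3 : ∀ a b : TT, srcT a = rngT b → degT (compT a b) = degT a + degT b := by decide
lemma L4 : ∀ a : TT, compT (rngT a) a = a := by decide
lemma L5 : ∀ a : TT, compT a (srcT a) = a := by decide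
lemma L6 : ∀ a b c : TT, compT (compT a b) c = compT a (compT b c) := by decide
lemma src_rng : ∀ a : TT, srcT (rngT a) = rngT a := by decide
lemma rng_rng : ∀ a : TT, rngT (rngT a) = rngT a := by decide
lemma src_src : ∀ a : TT, srcT (srcT a) = srcT a := by decide
lemma rng_src : ∀ a : TT, rngT (srcT a) = srcT a := by decide
lemma deg_rng : ∀ a : TT, degT (rngT a) = 0 := by decide
lemma deg_src : ∀ a : TT, degT (srcT a) = 0 := by decide
lemma L8 : ∀ a b : TT, srcT a = rngT b → compT a b = s0 → a = s0 ∧ b = s0 := by decide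
lemma L9 : ∀ a b : TT, srcT a = rngT b → ¬ Bd b → ¬ Bd (compT a b) := by decide
lemma L10 : ∀ a b : TT, srcT a = rngT b → Bd b → Bd (compT a b) := by decide
lemma L12 : ∀ a b : TT, srcT a = rngT b →
    a = finT (compT a b) (degT a) ∧ b = initT (compT a b) (degT b) := by decide
lemma Bd_rng {t : TT} (h : Bd t) : Bd (rngT t) := by revert h; revert t; decide
lemma Bd_src {t : TT} (h : Bd t) : Bd (srcT t) := by revert h; revert t; decide
lemma s0_rng : rngT s0 = s0 := rfl
lemma s0_src : srcT s0 = s0 := rfl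
lemma src_eq_s0 : ∀ t : TT, srcT t = s0 → t = s0 := by decide

lemma L11 (t : TT) (m nn : ℕ) (h : degT t = m + nn) :
    srcT (finT t m) = rngT (initT t nn) ∧ degT (finT t m) = m ∧ degT (initT t nn) = nn ∧
      compT (finT t m) (initT t nn) = t := by
  have hm : m = 0 ∨ m = 1 := by cases t <;> simp [degT] at h <;> omega
  have hn : nn = 0 ∨ nn = 1 := by cases t <;> simp [degT] at h <;> omega
  rcases hm with rfl | rfl <;> rcases hn with rfl | rfl <;>
    cases t <;> simp_all [degT, finT, initT, srcT, rngT, compT]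

lemma Bd_finT {t : TT} (m : ℕ) (h : Bd t) : Bd (finT t m) := by
  unfold finT; split
  · exact Bd_rng h
  · exact h

lemma Bd_initT {t : TT} (m : ℕ) (h : Bd t) : Bd (initT t m) := by
  unfold initT; split
  · exact Bd_src h
  · exact h

lemma s0_finT (m : ℕ) : finT s0 m = s0 := by unfold finT; split <;> rfl
lemma s0_initT (m : ℕ) : initT s0 m = s0 := by unfold initT; split <;> rfl

-- Raw morphisms and normalisation
abbrev Raw (n k : ℕ) : Type := Fin n × (Fin k → TT) × Bool

section
variable {n k : ℕ}

def zeroV (t : Fin k → TT) : Prop := ∀ j, t j = s0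
def bdry (t : Fin k → TT) : Prop := ∃ j, Bd (t j)

instance : DecidablePred (zeroV (k := k)) := fun t => by unfold zeroV; infer_instance
instance : DecidablePred (bdry (k := k)) := fun t => by unfold bdry; infer_instance

variable [NeZero n]

def norm (x : Raw n k) : Raw n k :=
  (if zeroV x.2.1 then 0 else x.1, x.2.1, if bdry x.2.1 then false else x.2.2)

@[simp] lemma norm_t (x : Raw n k) : (norm x).2.1 = x.2.1 := rfl

lemma norm_idem (x : Raw n k) : norm (norm x) = norm x := by
  unfold norm; simp only []
  split_ifs <;> rfl

def MM (n k : ℕ) [NeZero n] : Type := {x : Raw n k // norm x = x}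

instance : Finite (MM n k) := by unfold MM; infer_instance
instance : Countable (MM n k) := by infer_instance

def mkM (x : Raw n k) : MM n k := ⟨norm x, norm_idem x⟩

@[simp] lemma mkM_t (x : Raw n k) : (mkM x).1.2.1 = x.2.1 := rfl

lemma mk_self (x : MM n k) : mkM x.1 = x := Subtype.ext x.2

lemma mkM_eq_iff {x y : Raw n k} : mkM x = mkM y ↔
    x.2.1 = y.2.1 ∧ (zeroV x.2.1 ∨ x.1 = y.1) ∧ (bdry x.2.1 ∨ x.2.2 = y.2.2) := by
  constructor
  · intro h
    have h' : norm x = norm y := congrArg Subtype.val h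
    have ht : x.2.1 = y.2.1 := congrArg (fun z => z.2.1) h'
    refine ⟨ht, ?_, ?_⟩
    · have hc : (norm x).1 = (norm y).1 := congrArg Prod.fst h'
      unfold norm at hc; simp only [] at hc
      rw [← ht] at hc
      by_cases hz : zeroV x.2.1
      · exact Or.inl hz
      · rw [if_neg hz, if_neg hz] at hc; exact Or.inr hc
    · have hb : (norm x).2.2 = (norm y).2.2 := congrArg (fun z => z.2.2) h'
      unfold norm at hb; simp only [] at hb
      rw [← ht] at hb
      by_cases hz : bdry x.2.1
      · exact Or.inl hz
      · rw [if_neg hz, if_neg hz] at hb; exact Or.inr hb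
  · rintro ⟨ht, hc, hb⟩
    apply Subtype.ext
    show norm x = norm y
    unfold norm
    rw [← ht]
    rcases hc with hc | hc
    · rcases hb with hb | hb
      · simp [if_pos hc, if_pos hb]
      · simp [if_pos hc, hb]
    · rcases hb with hb | hb
      · simp [hc, if_pos hb]
      · simp [hc, hb]

-- operations
def dM (x : MM n k) : Fin k → ℕ := fun j => degT (x.1.2.1 j)
def rM (x : MM n k) : MM n k := mkM (x.1.1, fun j => rngT (x.1.2.1 j), x.1.2.2)
def sM (x : MM n k) : MM n k := mkM (x.1.1, fun j => srcT (x.1.2.1 j), x.1.2.2)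
def cM (x y : MM n k) : MM n k := mkM (y.1.1, fun j => compT (x.1.2.1 j) (y.1.2.1 j), y.1.2.2)

lemma cmp_of {x y : MM n k} (h : sM x = rM y) :
    ∀ j, srcT (x.1.2.1 j) = rngT (y.1.2.1 j) := by
  intro j
  have := congrArg (fun z : MM n k => z.1.2.1 j) h
  simpa [sM, rM] using this

lemma copy_of {x y : MM n k} (h : sM x = rM y) (hz : ¬ zeroV (fun j => srcT (x.1.2.1 j))) :
    x.1.1 = y.1.1 := by
  rcases (mkM_eq_iff.mp h) with ⟨ht, hc, _⟩
  rcases hc with hc | hc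
  · exact absurd hc hz
  · exact hc

lemma b_of {x y : MM n k} (h : sM x = rM y) (hz : ¬ bdry (fun j => srcT (x.1.2.1 j))) :
    x.1.2.2 = y.1.2.2 := by
  rcases (mkM_eq_iff.mp h) with ⟨ht, _, hb⟩
  rcases hb with hb | hb
  · exact absurd hb hz
  · exact hb

-- specialised ext-iff
lemma mkM_eq_iff' {c c' : Fin n} {t t' : Fin k → TT} {b b' : Bool} :
    mkM (n := n) (c, t, b) = mkM (c', t', b') ↔
      t = t' ∧ (zeroV t ∨ c = c') ∧ (bdry t ∨ b = b') := mkM_eq_iff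

-- stability lemmas
lemma rM_mkM (x : Raw n k) : rM (mkM x) = mkM (x.1, fun j => rngT (x.2.1 j), x.2.2) := by
  obtain ⟨c, t, b⟩ := x
  show mkM ((norm (c,t,b)).1, fun j => rngT (t j), (norm (c,t,b)).2.2) = _
  apply mkM_eq_iff'.mpr
  refine ⟨rfl, ?_, ?_⟩
  · by_cases hz : zeroV t
    · exact Or.inl (fun j => by show rngT (t j) = s0; rw [hz j]; rfl)
    · right; show (norm (c,t,b)).1 = c; unfold norm; simp [if_neg hz]
  · by_cases hb : bdry t
    · exact Or.inl (by obtain ⟨j, hj⟩ := hb; exact ⟨j, Bd_rng hj⟩)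
    · right; show (norm (c,t,b)).2.2 = b; unfold norm; simp [if_neg hb]

lemma sM_mkM (x : Raw n k) : sM (mkM x) = mkM (x.1, fun j => srcT (x.2.1 j), x.2.2) := by
  obtain ⟨c, t, b⟩ := x
  show mkM ((norm (c,t,b)).1, fun j => srcT (t j), (norm (c,t,b)).2.2) = _
  apply mkM_eq_iff'.mpr
  refine ⟨rfl, ?_, ?_⟩
  · by_cases hz : zeroV t
    · exact Or.inl (fun j => by show srcT (t j) = s0; rw [hz j]; rfl)
    · right; show (norm (c,t,b)).1 = c; unfold norm; simp [if_neg hz]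
  · by_cases hb : bdry t
    · exact Or.inl (by obtain ⟨j, hj⟩ := hb; exact ⟨j, Bd_src hj⟩)
    · right; show (norm (c,t,b)).2.2 = b; unfold norm; simp [if_neg hb]

lemma cM_mkM (x y : Raw n k) (hc : ∀ j, srcT (x.2.1 j) = rngT (y.2.1 j)) :
    cM (mkM x) (mkM y) = mkM (y.1, fun j => compT (x.2.1 j) (y.2.1 j), y.2.2) := by
  obtain ⟨c, t, b⟩ := x
  obtain ⟨c', t', b'⟩ := y
  replace hc : ∀ j, srcT (t j) = rngT (t' j) := hc
  show mkM ((norm (c',t',b')).1, fun j => compT (t j) (t' j), (norm (c',t',b')).2.2) = _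
  apply mkM_eq_iff'.mpr
  refine ⟨rfl, ?_, ?_⟩
  · by_cases hz : zeroV t'
    · left
      intro j
      show compT (t j) (t' j) = s0
      have hx : t j = s0 := by apply src_eq_s0; rw [hc j, hz j]; rfl
      rw [hx, hz j]; rfl
    · right; show (norm (c',t',b')).1 = c'; unfold norm; simp [if_neg hz]
  · by_cases hb : bdry t'
    · left
      obtain ⟨j, hj⟩ := hb
      exact ⟨j, L10 _ _ (hc j) hj⟩
    · right; show (norm (c',t',b')).2.2 = b'; unfold norm; simp [if_neg hb]

lemma rM_def (μ : MM n k) :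
    rM μ = mkM (μ.1.1, fun j => rngT (μ.1.2.1 j), μ.1.2.2) := rfl
lemma sM_def (μ : MM n k) :
    sM μ = mkM (μ.1.1, fun j => srcT (μ.1.2.1 j), μ.1.2.2) := rfl
lemma cM_def (μ ν : MM n k) :
    cM μ ν = mkM (ν.1.1, fun j => compT (μ.1.2.1 j) (ν.1.2.1 j), ν.1.2.2) := rfl
lemma cM_mk_left (x : Raw n k) (y : MM n k) :
    cM (mkM x) y = mkM (y.1.1, fun j => compT (x.2.1 j) (y.1.2.1 j), y.1.2.2) := rfl

lemma cM_mk_right (x : MM n k) (y : Raw n k) (hc : ∀ j, srcT (x.1.2.1 j) = rngT (y.2.1 j)) :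
    cM x (mkM y) = mkM (y.1, fun j => compT (x.1.2.1 j) (y.2.1 j), y.2.2) := by
  rw [show cM x (mkM y)
      = cM (mkM x.1) (mkM y) by rw [mk_self]]
  exact cM_mkM x.1 y hc

-- more TT lemmas
lemma notBd_rng : ∀ t : TT, ¬ Bd (rngT t) → t = s1 := by decide
lemma Bd_src' : ∀ t : TT, Bd (srcT t) → Bd t := by decide
lemma L9' : ∀ a b : TT, srcT a = rngT b → Bd (compT a b) → Bd b := by decide

lemma zeroV_src {t : Fin k → TT} (h : zeroV (fun j => srcT (t j))) : zeroV t :=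
  fun j => src_eq_s0 _ (h j)

lemma zeroV_srcrng {t : Fin k → TT} (h : zeroV (fun j => srcT (t j))) :
    zeroV (fun j => rngT (t j)) := fun j => by
  show rngT (t j) = s0
  rw [zeroV_src h j]
  rfl

-- the k-graph
def sphereGraph (n k : ℕ) [NeZero n] : KGraphOn k (MM n k) where
  countable := inferInstance
  d := dM
  r := rM
  s := sM
  comp := fun x y _ => cM x y
  d_r := fun μ => funext fun j => deg_rng _
  d_s := fun μ => funext fun j => deg_src _
  s_r := fun μ => by
    show sM (rM μ) = rM μ
    rw [rM_def μ, sM_mkM]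
    simp only [src_rng]
  r_r := fun μ => by
    show rM (rM μ) = rM μ
    rw [rM_def μ, rM_mkM]
    simp only [rng_rng]
  r_s := fun μ => by
    show rM (sM μ) = sM μ
    rw [sM_def μ, rM_mkM]
    simp only [rng_src]
  s_s := fun μ => by
    show sM (sM μ) = sM μ
    rw [sM_def μ, sM_mkM]
    simp only [src_src]
  r_comp := fun μ ν h => by
    have hc := cmp_of h
    show rM (cM μ ν) = rM μ
    rw [cM_def μ ν, rM_mkM, rM_def μ]
    have e1 : (fun j => rngT (compT (μ.1.2.1 j) (ν.1.2.1 j))) = fun j => rngT (μ.1.2.1 j) :=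
      funext fun j => L1 _ _ (hc j)
    rw [show (fun j => rngT ((ν.1.1, fun j => compT (μ.1.2.1 j) (ν.1.2.1 j), ν.1.2.2).2.1 j))
      = fun j => rngT (compT (μ.1.2.1 j) (ν.1.2.1 j)) from rfl, e1]
    apply mkM_eq_iff'.mpr
    refine ⟨rfl, ?_, ?_⟩
    · by_cases hz : zeroV (fun j => rngT (μ.1.2.1 j))
      · exact Or.inl hz
      · right
        refine (copy_of h ?_).symm
        intro hz'
        exact hz (zeroV_srcrng hz')
    · by_cases hb : bdry (fun j => rngT (μ.1.2.1 j))
      · exact Or.inl hb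
      · right
        refine (b_of h ?_).symm
        rintro ⟨j, hj⟩
        have hj' : Bd (srcT (μ.1.2.1 j)) := hj
        have h1 : μ.1.2.1 j = s1 := notBd_rng _ (fun hx => hb ⟨j, hx⟩)
        rw [h1] at hj'
        exact absurd hj' (by decide)
  s_comp := fun μ ν h => by
    have hc := cmp_of h
    show sM (cM μ ν) = sM ν
    rw [cM_def μ ν, sM_mkM, sM_def ν]
    have e1 : (fun j => srcT (compT (μ.1.2.1 j) (ν.1.2.1 j))) = fun j => srcT (ν.1.2.1 j) :=
      funext fun j => L2 _ _ (hc j)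
    rw [show (fun j => srcT ((ν.1.1, fun j => compT (μ.1.2.1 j) (ν.1.2.1 j), ν.1.2.2).2.1 j))
      = fun j => srcT (compT (μ.1.2.1 j) (ν.1.2.1 j)) from rfl, e1]
  d_comp := fun μ ν h => by
    have hc := cmp_of h
    funext j
    show degT (compT (μ.1.2.1 j) (ν.1.2.1 j)) = dM μ j + dM ν j
    exact L3 _ _ (hc j)
  id_comp := fun μ => by
    show cM (rM μ) μ = μ
    rw [rM_def μ, cM_mk_left]
    simp only [L4]
    exact mk_self μ
  comp_id := fun μ => by
    show cM μ (sM μ) = μ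
    rw [sM_def μ, cM_mk_right μ _ (fun j => (rng_src _).symm)]
    simp only [L5]
    exact mk_self μ
  assoc := fun μ ν ρ h₁ h₂ => by
    have hc1 := cmp_of h₁
    have hc2 := cmp_of h₂
    show cM (cM μ ν) ρ = cM μ (cM ν ρ)
    rw [cM_def μ ν, cM_def ν ρ, cM_mk_left,
      cM_mk_right μ _ (fun j => by
        show srcT (μ.1.2.1 j) = rngT (compT (ν.1.2.1 j) (ρ.1.2.1 j))
        rw [L1 _ _ (hc2 j)]; exact hc1 j)]
    simp only [L6]
  factor := by
    intro m nn lam hd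
    have hdj : ∀ j, degT (lam.1.2.1 j) = m j + nn j := fun j => congrFun hd j
    set p1 : MM n k := mkM (lam.1.1, fun j => finT (lam.1.2.1 j) (m j), lam.1.2.2) with hp1
    set p2 : MM n k := mkM (lam.1.1, fun j => initT (lam.1.2.1 j) (nn j), lam.1.2.2) with hp2
    have hcmp : sM p1 = rM p2 := by
      rw [hp1, hp2, sM_mkM, rM_mkM]
      apply mkM_eq_iff'.mpr
      exact ⟨funext fun j => (L11 _ _ _ (hdj j)).1, Or.inr rfl, Or.inr rfl⟩
    refine ⟨(p1, p2), ⟨hcmp, ?_, ?_, ?_⟩, ?_⟩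
    · funext j; exact (L11 _ _ _ (hdj j)).2.1
    · funext j; exact (L11 _ _ _ (hdj j)).2.2.1
    · show cM p1 p2 = lam
      rw [hp1, hp2, cM_mkM _ _ (fun j => (L11 _ _ _ (hdj j)).1)]
      simp only []
      have : (fun j => compT (finT (lam.1.2.1 j) (m j)) (initT (lam.1.2.1 j) (nn j)))
          = lam.1.2.1 := funext fun j => (L11 _ _ _ (hdj j)).2.2.2
      rw [this]
      exact mk_self lam
    · rintro ⟨q1, q2⟩ ⟨h, hd1, hd2, hcq⟩
      have hc := cmp_of h
      change cM q1 q2 = lam at hcq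
      have ht : lam.1.2.1 = fun j => compT (q1.1.2.1 j) (q2.1.2.1 j) := by
        rw [← hcq]; rfl
      have hm : ∀ j, degT (q1.1.2.1 j) = m j := fun j => congrFun hd1 j
      have hn : ∀ j, degT (q2.1.2.1 j) = nn j := fun j => congrFun hd2 j
      have ht1 : q1.1.2.1 = fun j => finT (lam.1.2.1 j) (m j) := by
        funext j
        rw [ht]
        simp only []
        rw [← hm j]
        exact (L12 _ _ (hc j)).1
      have ht2 : q2.1.2.1 = fun j => initT (lam.1.2.1 j) (nn j) := by
        funext j
        rw [ht]
        simp only []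
        rw [← hn j]
        exact (L12 _ _ (hc j)).2
      have hiff := mkM_eq_iff.mp
        (show mkM (q2.1.1, fun j => compT (q1.1.2.1 j) (q2.1.2.1 j), q2.1.2.2) = mkM lam.1 by
          rw [mk_self]; exact hcq)
      obtain ⟨_, hcopy, hbool⟩ := hiff
      have e2 : q2 = p2 := by
        rw [← mk_self q2, hp2]
        apply mkM_eq_iff.mpr
        refine ⟨ht2, ?_, ?_⟩
        · by_cases hz : zeroV q2.1.2.1
          · exact Or.inl hz
          · right
            rcases hcopy with hzc | hce
            · exact absurd (fun j => (L8 _ _ (hc j) (hzc j)).2) hz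
            · exact hce
        · by_cases hb : bdry q2.1.2.1
          · exact Or.inl hb
          · right
            rcases hbool with hbc | hbe
            · obtain ⟨j, hj⟩ := hbc
              exact absurd ⟨j, L9' _ _ (hc j) hj⟩ hb
            · exact hbe
      have e1 : q1 = p1 := by
        rw [← mk_self q1, hp1]
        apply mkM_eq_iff.mpr
        refine ⟨ht1, ?_, ?_⟩
        · by_cases hz : zeroV q1.1.2.1
          · exact Or.inl hz
          · right
            have h1 : q1.1.1 = q2.1.1 := copy_of h (fun hz' => hz (zeroV_src hz'))
            have h2 : q2.1.1 = lam.1.1 := by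
              rcases hcopy with hzc | hce
              · exact absurd (fun j => (L8 _ _ (hc j) (hzc j)).1) hz
              · exact hce
            exact h1.trans h2
        · by_cases hb : bdry q1.1.2.1
          · exact Or.inl hb
          · right
            have h1 : q1.1.2.2 = q2.1.2.2 := b_of h (fun ⟨j, hj⟩ => hb ⟨j, Bd_src' _ hj⟩)
            have h2 : q2.1.2.2 = lam.1.2.2 := by
              rcases hbool with hbc | hbe
              · obtain ⟨j, hj⟩ := hbc
                have hs1 : q2.1.2.1 j = s1 := by
                  apply notBd_rng
                  rw [← hc j]
                  intro hx
                  exact hb ⟨j, Bd_src' _ hx⟩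
                have hj' : Bd (compT (q1.1.2.1 j) (q2.1.2.1 j)) := hj
                rw [hs1] at hj'
                exact absurd ⟨j, hj'⟩ hb
              · exact hbe
            exact h1.trans h2
      rw [e1, e2]

-- degree helper
lemma degT_le_one : ∀ t : TT, degT t ≤ 1 := by decide

lemma degT_initT (t : TT) (q : ℕ) : degT (initT t q) = if q = 0 then 0 else degT t := by
  unfold initT; split_ifs <;> simp [deg_src]

-- the canonical factor pair satisfies everything (restated outside `factor`)
lemma pair_cmp (lam : MM n k) (m nn : Fin k → ℕ) (hdj : ∀ j, degT (lam.1.2.1 j) = m j + nn j) :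
    sM (mkM (lam.1.1, fun j => finT (lam.1.2.1 j) (m j), lam.1.2.2))
      = rM (mkM (lam.1.1, fun j => initT (lam.1.2.1 j) (nn j), lam.1.2.2)) := by
  rw [sM_mkM, rM_mkM]
  apply mkM_eq_iff'.mpr
  exact ⟨funext fun j => (L11 _ _ _ (hdj j)).1, Or.inr rfl, Or.inr rfl⟩

lemma split_eq (lam : MM n k) (m : Fin k → ℕ) (hm : ∀ j, m j ≤ degT (lam.1.2.1 j)) :
    (sphereGraph n k).split lam m =
      (mkM (lam.1.1, fun j => finT (lam.1.2.1 j) (m j), lam.1.2.2),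
       mkM (lam.1.1, fun j => initT (lam.1.2.1 j) (degT (lam.1.2.1 j) - m j), lam.1.2.2)) := by
  classical
  set nn : Fin k → ℕ := fun j => degT (lam.1.2.1 j) - m j with hnn
  have hdj : ∀ j, degT (lam.1.2.1 j) = m j + nn j := fun j => by
    have := hm j; simp [hnn]; omega
  have hd : (sphereGraph n k).d lam = m + nn := funext fun j => hdj j
  obtain ⟨p, hp, hu⟩ := (sphereGraph n k).factor m nn lam hd
  set P1 : MM n k := mkM (lam.1.1, fun j => finT (lam.1.2.1 j) (m j), lam.1.2.2) with hP1
  set P2 : MM n k := mkM (lam.1.1, fun j => initT (lam.1.2.1 j) (nn j), lam.1.2.2) with hP2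
  have hcmp : (sphereGraph n k).s P1 = (sphereGraph n k).r P2 := pair_cmp lam m nn hdj
  have hda : (sphereGraph n k).d P1 = m := funext fun j => (L11 _ _ _ (hdj j)).2.1
  have hdb : (sphereGraph n k).d P2 = nn := funext fun j => (L11 _ _ _ (hdj j)).2.2.1
  have hcomp : (sphereGraph n k).comp P1 P2 hcmp = lam := by
    show cM _ _ = lam
    rw [hP1, hP2, cM_mkM _ _ (fun j => (L11 _ _ _ (hdj j)).1)]
    simp only []
    have e : (fun j => compT (finT (lam.1.2.1 j) (m j)) (initT (lam.1.2.1 j) (nn j)))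
        = lam.1.2.1 := funext fun j => (L11 _ _ _ (hdj j)).2.2.2
    rw [e]
    exact mk_self lam
  have hexists : ∃ q : MM n k × MM n k, ∃ hc : (sphereGraph n k).s q.1 = (sphereGraph n k).r q.2,
      (sphereGraph n k).d q.1 = m ∧ (sphereGraph n k).comp q.1 q.2 hc = lam :=
    ⟨(P1, P2), hcmp, hda, hcomp⟩
  unfold KGraphOn.split
  rw [dif_pos hexists]
  obtain ⟨hc, hd1, hco⟩ := hexists.choose_spec
  have hd2 : (sphereGraph n k).d hexists.choose.2 = nn := by
    have hh := (sphereGraph n k).d_comp hexists.choose.1 hexists.choose.2 hc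
    rw [hco] at hh
    funext j
    have h1 := congrFun hh j
    have h2 := congrFun hd1 j
    have h3 := hdj j
    have h4 : (sphereGraph n k).d lam j = degT (lam.1.2.1 j) := rfl
    simp only [Pi.add_apply] at h1
    show (sphereGraph n k).d hexists.choose.2 j = nn j
    omega
  have e1 : hexists.choose = p := hu _ ⟨hc, hd1, hd2, hco⟩
  have e2 : (P1, P2) = p := hu _ ⟨hcmp, hda, hdb, hcomp⟩
  rw [e1, ← e2]

lemma mkM_fields (x : Raw n k) (f : Fin k → TT → TT) (hz : ∀ j, f j s0 = s0)
    (hbd : ∀ j t, Bd t → Bd (f j t)) :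
    mkM ((mkM x).1.1, fun j => f j (x.2.1 j), (mkM x).1.2.2)
      = mkM (x.1, fun j => f j (x.2.1 j), x.2.2) := by
  apply mkM_eq_iff.mpr
  refine ⟨rfl, ?_, ?_⟩
  · by_cases hzx : zeroV x.2.1
    · left; intro j; show f j (x.2.1 j) = s0; rw [hzx j, hz j]
    · right; show (norm x).1 = x.1; unfold norm; simp [if_neg hzx]
  · by_cases hbx : bdry x.2.1
    · left; obtain ⟨j, hj⟩ := hbx; exact ⟨j, hbd j _ hj⟩
    · right; show (norm x).2.2 = x.2.2; unfold norm; simp [if_neg hbx]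

def segF (t : TT) (mj nj : ℕ) : TT := finT (initT t (degT t - mj)) (nj - mj)

lemma seg_eq (lam : MM n k) (m nb : Fin k → ℕ) (hmn : ∀ j, m j ≤ nb j)
    (hn : ∀ j, nb j ≤ degT (lam.1.2.1 j)) :
    (sphereGraph n k).seg lam m nb
      = mkM (lam.1.1, fun j => segF (lam.1.2.1 j) (m j) (nb j), lam.1.2.2) := by
  unfold KGraphOn.seg
  have hm : ∀ j, m j ≤ degT (lam.1.2.1 j) := fun j => le_trans (hmn j) (hn j)
  rw [split_eq lam m hm]
  simp only []
  have h2 : ∀ j, (nb - m) j ≤ degT ((mkM (lam.1.1,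
      fun j => initT (lam.1.2.1 j) (degT (lam.1.2.1 j) - m j), lam.1.2.2)).1.2.1 j) := by
    intro j
    show nb j - m j ≤ degT (initT (lam.1.2.1 j) (degT (lam.1.2.1 j) - m j))
    rw [degT_initT]
    split_ifs with h
    · have := hn j; omega
    · have := hn j; omega
  rw [split_eq _ _ h2]
  simp only []
  have e : (fun j => finT ((mkM (lam.1.1, fun j =>
        initT (lam.1.2.1 j) (degT (lam.1.2.1 j) - m j), lam.1.2.2)).1.2.1 j) ((nb - m) j))
      = fun j => (fun (t : TT) => finT t (nb j - m j))
          ((lam.1.1, fun j => initT (lam.1.2.1 j) (degT (lam.1.2.1 j) - m j),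
            lam.1.2.2).2.1 j) := rfl
  rw [e, mkM_fields (lam.1.1, fun j => initT (lam.1.2.1 j) (degT (lam.1.2.1 j) - m j), lam.1.2.2)
    (fun j t => finT t (nb j - m j)) (fun j => s0_finT _) (fun j t ht => Bd_finT _ ht)]
  rfl

-- geometric coordinate functions
noncomputable def posC : TT → ℝ → ℝ
  | s0, _ => 0
  | s1, _ => 1
  | s2, _ => 2
  | e0, u => u
  | e2, u => 2 - u

noncomputable def canonSeg (x : ℝ) : TT :=
  if x = 0 then s0 else if x < 1 then e0 else if x = 1 then s1 else if x < 2 then e2 else s2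

noncomputable def canonFr (x : ℝ) : ℝ :=
  if x < 1 then x else if x = 1 then 0 else if x < 2 then 2 - x else 0

lemma posC_mem {t : TT} {u : ℝ} (h0 : 0 ≤ u) (h1 : u ≤ degT t) :
    0 ≤ posC t u ∧ posC t u ≤ 2 := by
  cases t <;> simp [posC, degT] at h1 ⊢ <;> constructor <;> linarith

lemma ceil_eq_one' {u : ℝ} (h0 : 0 < u) (h1 : u ≤ 1) : ⌈u⌉₊ = 1 := by
  have a1 : ⌈u⌉₊ ≤ 1 := Nat.ceil_le.mpr (by exact_mod_cast h1)
  have a2 : 0 < ⌈u⌉₊ := Nat.lt_ceil.mpr (by exact_mod_cast h0)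
  omega

lemma CC (t : TT) (u : ℝ) (h0 : 0 ≤ u) (h1 : u ≤ degT t) :
    segF t ⌊u⌋₊ ⌈u⌉₊ = canonSeg (posC t u) ∧ u - (⌊u⌋₊ : ℝ) = canonFr (posC t u) := by
  cases t
  case s0 =>
    have hu : u = 0 := le_antisymm (by simpa [degT] using h1) h0
    subst hu
    norm_num [segF, posC, canonSeg, canonFr, degT, initT, finT, srcT, rngT]
  case s1 =>
    have hu : u = 0 := le_antisymm (by simpa [degT] using h1) h0
    subst hu
    norm_num [segF, posC, canonSeg, canonFr, degT, initT, finT, srcT, rngT]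
  case s2 =>
    have hu : u = 0 := le_antisymm (by simpa [degT] using h1) h0
    subst hu
    norm_num [segF, posC, canonSeg, canonFr, degT, initT, finT, srcT, rngT]
  case e0 =>
    have h1' : u ≤ 1 := by simpa [degT] using h1
    rcases eq_or_lt_of_le h1' with hu1 | hu1
    · subst hu1
      norm_num [segF, posC, canonSeg, canonFr, degT, initT, finT, srcT, rngT]
    · rcases h0.eq_or_lt with hu0 | hu0
      · rw [← hu0]
        norm_num [segF, posC, canonSeg, canonFr, degT, initT, finT, srcT, rngT]
      · have hf : ⌊u⌋₊ = 0 := Nat.floor_eq_zero.mpr hu1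
        have hcl : ⌈u⌉₊ = 1 := ceil_eq_one' hu0 h1'
        rw [hf, hcl]
        constructor
        · show segF e0 0 1 = canonSeg u
          rw [show segF e0 0 1 = e0 from rfl]
          unfold canonSeg
          rw [if_neg (ne_of_gt hu0), if_pos hu1]
        · show u - ((0:ℕ):ℝ) = canonFr u
          unfold canonFr
          rw [if_pos hu1]
          norm_num
  case e2 =>
    have h1' : u ≤ 1 := by simpa [degT] using h1
    have hp : posC e2 u = 2 - u := rfl
    rcases eq_or_lt_of_le h1' with hu1 | hu1
    · subst hu1
      norm_num [segF, posC, canonSeg, canonFr, degT, initT, finT, srcT, rngT]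
    · rcases h0.eq_or_lt with hu0 | hu0
      · rw [← hu0]
        norm_num [segF, posC, canonSeg, canonFr, degT, initT, finT, srcT, rngT]
      · have hf : ⌊u⌋₊ = 0 := Nat.floor_eq_zero.mpr hu1
        have hcl : ⌈u⌉₊ = 1 := ceil_eq_one' hu0 h1'
        rw [hf, hcl, hp]
        constructor
        · show segF e2 0 1 = canonSeg (2 - u)
          rw [show segF e2 0 1 = e2 from rfl]
          unfold canonSeg
          rw [if_neg (by intro h; linarith), if_neg (by intro h; linarith),
            if_neg (by intro h; linarith), if_pos (by linarith)]
        · show u - ((0:ℕ):ℝ) = canonFr (2 - u)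
          unfold canonFr
          rw [if_neg (by intro h; linarith), if_neg (by intro h; linarith),
            if_pos (by linarith)]
          norm_num
  
lemma CC2 (x : ℝ) (h0 : 0 ≤ x) (h2 : x ≤ 2) : posC (canonSeg x) (canonFr x) = x := by
  unfold canonSeg canonFr
  split_ifs <;> simp [posC] <;> linarith

lemma CBd (x : ℝ) (h0 : 0 ≤ x) (h2 : x ≤ 2) : Bd (canonSeg x) ↔ (x = 0 ∨ x = 2) := by
  unfold canonSeg
  split_ifs with a b c d
  · simp [Bd]; exact Or.inl a
  · constructor
    · intro h; exact absurd h (by decide)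
    · rintro (h | h)
      · exact absurd h a
      · linarith
  · constructor
    · intro h; exact absurd h (by decide)
    · rintro (h | h) <;> (subst c; norm_num at h)
  · constructor
    · intro h; exact absurd h (by decide)
    · rintro (h | h)
      · exact absurd h a
      · linarith
  · have hx : x = 2 := le_antisymm h2 (not_lt.mp d)
    simp [Bd]; exact Or.inr hx

lemma Czero (x : ℝ) (h0 : 0 ≤ x) (h2 : x ≤ 2) : canonSeg x = s0 ↔ x = 0 := by
  unfold canonSeg
  split_ifs with a b c d
  · simp [a]
  · exact ⟨fun h => absurd h (by decide), fun h => absurd h a⟩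
  · exact ⟨fun h => absurd h (by decide), fun h => by subst c; norm_num at h⟩
  · exact ⟨fun h => absurd h (by decide), fun h => absurd h a⟩
  · refine ⟨fun h => absurd h (by decide), fun h => ?_⟩
    subst h; norm_num at d

lemma CfrZero : canonFr 0 = 0 := by unfold canonFr; norm_num

end

-- Euclidean-space maps
section Geom

variable {k : ℕ}

abbrev Euc (k : ℕ) := EuclideanSpace ℝ (Fin k)

noncomputable def mkE (f : Fin k → ℝ) : Euc k := (WithLp.equiv 2 (Fin k → ℝ)).symm f

@[simp] lemma mkE_apply (f : Fin k → ℝ) (j : Fin k) : mkE f j = f j := rfl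

noncomputable def rI (v : Euc k) : ℝ := ‖(WithLp.equiv 2 (Fin k → ℝ)) v‖

lemma equiv_apply (v : Euc k) (j : Fin k) : (WithLp.equiv 2 (Fin k → ℝ)) v j = v j := rfl

lemma rI_nonneg (v : Euc k) : 0 ≤ rI v := norm_nonneg _

lemma abs_le_rI (v : Euc k) (j : Fin k) : |v j| ≤ rI v := by
  have := norm_le_pi_norm ((WithLp.equiv 2 (Fin k → ℝ)) v) j
  simpa [Real.norm_eq_abs, equiv_apply, rI] using this

lemma rI_le {v : Euc k} {c : ℝ} (hc : 0 ≤ c) (h : ∀ j, |v j| ≤ c) : rI v ≤ c := by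
  refine (pi_norm_le_iff_of_nonneg hc).mpr fun j => ?_
  simpa [Real.norm_eq_abs, equiv_apply] using h j

lemma rI_lt_iff {v : Euc k} {c : ℝ} (hc : 0 < c) : rI v < c ↔ ∀ j, |v j| < c := by
  rw [show rI v = ‖(WithLp.equiv 2 (Fin k → ℝ)) v‖ from rfl, pi_norm_lt_iff hc]
  simp [Real.norm_eq_abs, equiv_apply]

lemma rI_eq_zero {v : Euc k} : rI v = 0 ↔ v = 0 := by
  rw [show rI v = ‖(WithLp.equiv 2 (Fin k → ℝ)) v‖ from rfl, norm_eq_zero]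
  constructor
  · intro h
    ext j
    exact congrFun h j
  · intro h; subst h; rfl

lemma rI_smul (c : ℝ) (v : Euc k) : rI (c • v) = |c| * rI v := by
  rw [show rI (c • v) = ‖(WithLp.equiv 2 (Fin k → ℝ)) (c • v)‖ from rfl]
  rw [show (WithLp.equiv 2 (Fin k → ℝ)) (c • v) = c • (WithLp.equiv 2 (Fin k → ℝ)) v from rfl]
  rw [norm_smul, Real.norm_eq_abs]
  rfl

lemma sum_sq_eq (v : Euc k) : ∑ j, v j ^ 2 = ‖v‖ ^ 2 := by
  rw [EuclideanSpace.norm_eq]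
  rw [Real.sq_sqrt (by positivity)]
  congr 1
  funext j
  rw [Real.norm_eq_abs, sq_abs]

lemma rI_le_norm (v : Euc k) : rI v ≤ ‖v‖ := by
  refine rI_le (norm_nonneg v) fun j => ?_
  have h1 : v j ^ 2 ≤ ∑ i, v i ^ 2 :=
    Finset.single_le_sum (f := fun i => v i ^ 2) (fun i _ => sq_nonneg _) (Finset.mem_univ j)
  rw [sum_sq_eq] at h1
  calc |v j| = Real.sqrt (v j ^ 2) := (Real.sqrt_sq_eq_abs _).symm
    _ ≤ Real.sqrt (‖v‖ ^ 2) := Real.sqrt_le_sqrt h1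
    _ = ‖v‖ := by rw [Real.sqrt_sq (norm_nonneg _)]

lemma rI_cont : Continuous (rI (k := k)) :=
  continuous_norm.comp (PiLp.continuous_ofLp 2 (fun _ : Fin k => ℝ))

noncomputable def Bmap (v : Euc k) : Euc k := if v = 0 then 0 else (rI v / ‖v‖) • v
noncomputable def Amap (w : Euc k) : Euc k := if w = 0 then 0 else (‖w‖ / rI w) • w

lemma norm_Bmap (v : Euc k) : ‖Bmap v‖ = rI v := by
  unfold Bmap
  split_ifs with h
  · subst h; simp [rI_eq_zero.mpr rfl]
  · rw [norm_smul, Real.norm_eq_abs, abs_div, abs_of_nonneg (rI_nonneg v),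
      abs_of_nonneg (norm_nonneg v), div_mul_cancel₀]
    exact norm_ne_zero_iff.mpr h

lemma rI_Amap (w : Euc k) : rI (Amap w) = ‖w‖ := by
  unfold Amap
  split_ifs with h
  · subst h; simp [rI_eq_zero.mpr rfl]
  · rw [rI_smul, abs_div, abs_of_nonneg (norm_nonneg w), abs_of_nonneg (rI_nonneg w),
      div_mul_cancel₀]
    intro hz
    exact h (rI_eq_zero.mp hz)

lemma Bmap_Amap (w : Euc k) : Bmap (Amap w) = w := by
  by_cases h : w = 0
  · subst h; simp [Amap, Bmap]
  · have hr : rI w ≠ 0 := fun hz => h (rI_eq_zero.mp hz)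
    have hn : ‖w‖ ≠ 0 := norm_ne_zero_iff.mpr h
    have hA : Amap w = (‖w‖ / rI w) • w := if_neg h
    have hAne : Amap w ≠ 0 := by
      intro hz
      have := rI_Amap w
      rw [hz] at this
      simp [rI_eq_zero.mpr rfl] at this
      exact hn this.symm
    have hnA : ‖Amap w‖ = ‖w‖ ^ 2 / rI w := by
      rw [hA, norm_smul, Real.norm_eq_abs, abs_div, abs_of_nonneg (norm_nonneg w),
        abs_of_nonneg (rI_nonneg w)]
      ring
    unfold Bmap
    rw [if_neg hAne, rI_Amap, hnA, hA, smul_smul]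
    rw [show ‖w‖ / (‖w‖ ^ 2 / rI w) * (‖w‖ / rI w) = 1 by field_simp]
    exact one_smul _ _

lemma Amap_Bmap (v : Euc k) : Amap (Bmap v) = v := by
  by_cases h : v = 0
  · subst h; simp [Amap, Bmap]
  · have hr : rI v ≠ 0 := fun hz => h (rI_eq_zero.mp hz)
    have hn : ‖v‖ ≠ 0 := norm_ne_zero_iff.mpr h
    have hB : Bmap v = (rI v / ‖v‖) • v := if_neg h
    have hBne : Bmap v ≠ 0 := by
      intro hz
      have := norm_Bmap v
      rw [hz] at this
      simp at this
      exact hr this.symm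
    have hrB : rI (Bmap v) = rI v ^ 2 / ‖v‖ := by
      rw [hB, rI_smul, abs_div, abs_of_nonneg (rI_nonneg v), abs_of_nonneg (norm_nonneg v)]
      ring
    unfold Amap
    rw [if_neg hBne, norm_Bmap, hrB, hB, smul_smul]
    rw [show rI v / (rI v ^ 2 / ‖v‖) * (rI v / ‖v‖) = 1 by field_simp]
    exact one_smul _ _

lemma Bmap_cont : Continuous (Bmap (k := k)) := by
  rw [continuous_iff_continuousAt]
  intro v
  by_cases h : v = 0
  · subst h
    have hB0 : Bmap (0 : Euc k) = 0 := by simp [Bmap]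
    rw [ContinuousAt, hB0]
    apply squeeze_zero_norm (a := fun x : Euc k => ‖x‖)
    · intro x
      rw [norm_Bmap]
      exact rI_le_norm x
    · simpa using tendsto_norm_zero
  · have heq : Bmap =ᶠ[nhds v] fun x => (rI x / ‖x‖) • x := by
      refine Filter.eventually_of_mem (IsOpen.mem_nhds isOpen_compl_singleton h) ?_
      intro x hx
      exact if_neg hx
    refine ContinuousAt.congr ?_ heq.symm
    exact ((rI_cont.continuousAt).div (continuous_norm.continuousAt)
      (norm_ne_zero_iff.mpr h)).smul continuousAt_id

noncomputable def qval (v : Euc k) (e : Bool) : Euc (k + 1) :=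
  mkE (Fin.snoc (fun j => Bmap v j) ((if e then (-1:ℝ) else 1) * Real.sqrt (1 - rI v ^ 2)))

lemma qval_castSucc (v : Euc k) (e : Bool) (j : Fin k) :
    qval v e j.castSucc = Bmap v j := by
  unfold qval
  rw [mkE_apply, Fin.snoc_castSucc]

lemma qval_last (v : Euc k) (e : Bool) :
    qval v e (Fin.last k) = (if e then (-1:ℝ) else 1) * Real.sqrt (1 - rI v ^ 2) := by
  unfold qval
  rw [mkE_apply, Fin.snoc_last]

lemma norm_qval {v : Euc k} (h : rI v ≤ 1) (e : Bool) : ‖qval v e‖ = 1 := by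
  have hsum : ∑ i, qval v e i ^ 2 = 1 := by
    rw [Fin.sum_univ_castSucc]
    have h1 : ∀ j : Fin k, qval v e j.castSucc ^ 2 = Bmap v j ^ 2 := fun j => by
      rw [qval_castSucc]
    rw [Finset.sum_congr rfl (fun j _ => h1 j), qval_last, sum_sq_eq, norm_Bmap, mul_pow]
    have h2 : ((if e then (-1:ℝ) else 1)) ^ 2 = 1 := by cases e <;> norm_num
    rw [h2, one_mul, Real.sq_sqrt (by nlinarith [rI_nonneg v])]
    ring
  have := sum_sq_eq (qval v e)
  rw [hsum] at this
  have hnn := norm_nonneg (qval v e)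
  nlinarith

lemma qval_inj {v w : Euc k} {e f : Bool} (hv : rI v ≤ 1) (hw : rI w ≤ 1)
    (h : qval v e = qval w f) : v = w ∧ (rI v = 1 ∨ e = f) := by
  have hB : Bmap v = Bmap w := by
    ext j
    have hh : qval v e j.castSucc = qval w f j.castSucc := by rw [h]
    rwa [qval_castSucc, qval_castSucc] at hh
  have hvw : v = w := by
    rw [← Amap_Bmap v, ← Amap_Bmap w, hB]
  refine ⟨hvw, ?_⟩
  rcases eq_or_lt_of_le hv with h1 | h1
  · exact Or.inl h1
  · right
    have hz : qval v e (Fin.last k) = qval w f (Fin.last k) := by rw [h]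
    rw [qval_last, qval_last, hvw] at hz
    have hpos : 0 < Real.sqrt (1 - rI w ^ 2) := by
      apply Real.sqrt_pos.mpr
      rw [← hvw]
      nlinarith [rI_nonneg v]
    cases e <;> cases f <;> simp at hz ⊢ <;> nlinarith

lemma qval_bdry {v : Euc k} (h : rI v = 1) (e f : Bool) : qval v e = qval v f := by
  unfold qval
  rw [show (1 : ℝ) - rI v ^ 2 = 0 by rw [h]; ring]
  simp [Real.sqrt_zero]

end Geom

section Core

variable (n k : ℕ) [NeZero n] [NeZero k]

instance finNe : Nonempty (Fin k) := ⟨⟨0, Nat.pos_of_ne_zero (NeZero.ne k)⟩⟩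

abbrev Cell := Σ lam : MM n k, ↥(cube k ((sphereGraph n k).d lam))

variable {n k}

lemma cell_bounds (x : Cell n k) (j : Fin k) :
    0 ≤ x.2.1 j ∧ x.2.1 j ≤ degT (x.1.1.2.1 j) := by
  have hm := Set.mem_Icc.mp
    (show x.2.1 ∈ Set.Icc (0 : Fin k → ℝ)
      (fun i => (((sphereGraph n k).d x.1) i : ℝ)) from x.2.2)
  exact ⟨hm.1 j, by exact_mod_cast hm.2 j⟩

noncomputable def XPt (x : Cell n k) : Euc k :=
  mkE (fun j => posC (x.1.1.2.1 j) (x.2.1 j) - 1)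

lemma rI_XPt_le (x : Cell n k) : rI (XPt x) ≤ 1 := by
  refine rI_le zero_le_one fun j => ?_
  obtain ⟨h0, h1⟩ := cell_bounds x j
  obtain ⟨hp0, hp2⟩ := posC_mem h0 h1
  rw [XPt, mkE_apply, abs_le]
  constructor <;> linarith

noncomputable def Psi0 (x : Cell n k) : Fin n × (Metric.sphere (0 : Euc (k+1)) 1) :=
  (x.1.1.1, ⟨qval (XPt x) x.1.1.2.2,
    mem_sphere_zero_iff_norm.mpr (norm_qval (rI_XPt_le x) _)⟩)

noncomputable def negOne : Euc k := mkE (fun _ => (-1 : ℝ))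

lemma rI_negOne : rI (negOne (k := k)) = 1 := by
  have h1 : rI (negOne (k := k)) ≤ 1 := rI_le zero_le_one fun j => by
    rw [negOne, mkE_apply]; norm_num
  have h2 : (1 : ℝ) ≤ rI (negOne (k := k)) := by
    have h3 := abs_le_rI (negOne (k := k)) (Classical.arbitrary (Fin k))
    rw [show (negOne (k := k)) (Classical.arbitrary (Fin k)) = -1 from rfl] at h3
    norm_num at h3
    exact h3
  linarith

variable (n k)

noncomputable def pp : Fin n → (Metric.sphere (0 : Euc (k+1)) 1) := fun _ =>
  ⟨qval (negOne (k := k)) false,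
    mem_sphere_zero_iff_norm.mpr (norm_qval (le_of_eq rI_negOne) _)⟩

variable {n k}

lemma segM (x : Cell n k) :
    (sphereGraph n k).seg x.1 (fun i => ⌊x.2.1 i⌋₊) (fun i => ⌈x.2.1 i⌉₊)
      = mkM (x.1.1.1, fun j => canonSeg (posC (x.1.1.2.1 j) (x.2.1 j)), x.1.1.2.2) := by
  have hmn : ∀ j, ⌊x.2.1 j⌋₊ ≤ ⌈x.2.1 j⌉₊ := fun j => Nat.floor_le_ceil _
  have hn : ∀ j, ⌈x.2.1 j⌉₊ ≤ degT (x.1.1.2.1 j) := fun j =>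
    Nat.ceil_le.mpr (by exact_mod_cast (cell_bounds x j).2)
  rw [seg_eq x.1 _ _ hmn hn]
  congr 1
  refine congrArg (fun t => (x.1.1.1, t, x.1.1.2.2)) ?_
  funext j
  exact (CC _ _ (cell_bounds x j).1 (cell_bounds x j).2).1

lemma fracM (x : Cell n k) (i : Fin k) :
    x.2.1 i - (⌊x.2.1 i⌋₊ : ℝ) = canonFr (posC (x.1.1.2.1 i) (x.2.1 i)) :=
  (CC _ _ (cell_bounds x i).1 (cell_bounds x i).2).2

lemma wedge_equiv (p : Fin n → (Metric.sphere (0 : Euc (k+1)) 1)) :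
    Equivalence (wedgeRel n k p) := by
  constructor
  · exact fun x => Or.inl rfl
  · rintro x y (rfl | ⟨h1, h2⟩)
    · exact Or.inl rfl
    · exact Or.inr ⟨h2, h1⟩
  · rintro x y z (rfl | ⟨h1, h2⟩) (rfl | ⟨h3, h4⟩)
    · exact Or.inl rfl
    · exact Or.inr ⟨h3, h4⟩
    · exact Or.inr ⟨h1, h2⟩
    · exact Or.inr ⟨h1, h4⟩

lemma core_mp (x y : Cell n k) (h : realRel (sphereGraph n k) x y) :
    Quot.mk (wedgeRel n k (pp n k)) (Psi0 x) = Quot.mk _ (Psi0 y) := by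
  obtain ⟨hseg, hfr⟩ := h
  rw [segM x, segM y] at hseg
  obtain ⟨hts, hcs, hbs⟩ := mkM_eq_iff.mp hseg
  replace hts : (fun j => canonSeg (posC (x.1.1.2.1 j) (x.2.1 j)))
      = (fun j => canonSeg (posC (y.1.1.2.1 j) (y.2.1 j))) := hts
  replace hcs : zeroV (fun j => canonSeg (posC (x.1.1.2.1 j) (x.2.1 j)))
      ∨ x.1.1.1 = y.1.1.1 := hcs
  replace hbs : bdry (fun j => canonSeg (posC (x.1.1.2.1 j) (x.2.1 j)))
      ∨ x.1.1.2.2 = y.1.1.2.2 := hbs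
  have hfr' : ∀ j, canonFr (posC (x.1.1.2.1 j) (x.2.1 j))
      = canonFr (posC (y.1.1.2.1 j) (y.2.1 j)) := fun j => by
    rw [← fracM x j, ← fracM y j]
    exact congrFun hfr j
  have hX : ∀ j, posC (x.1.1.2.1 j) (x.2.1 j) = posC (y.1.1.2.1 j) (y.2.1 j) := fun j => by
    obtain ⟨hx0, hx1⟩ := cell_bounds x j
    obtain ⟨hy0, hy1⟩ := cell_bounds y j
    obtain ⟨hpx0, hpx2⟩ := posC_mem hx0 hx1
    obtain ⟨hpy0, hpy2⟩ := posC_mem hy0 hy1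
    rw [← CC2 _ hpx0 hpx2, ← CC2 _ hpy0 hpy2, congrFun hts j, hfr' j]
  have hXPt : XPt x = XPt y := by
    unfold XPt mkE
    refine congrArg _ ?_
    funext j
    rw [hX j]
  by_cases hbd : bdry (fun j => canonSeg (posC (x.1.1.2.1 j) (x.2.1 j)))
  · obtain ⟨j0, hj0⟩ := hbd
    have hr1 : rI (XPt x) = 1 := by
      obtain ⟨hx0, hx1⟩ := cell_bounds x j0
      obtain ⟨hp0, hp2⟩ := posC_mem hx0 hx1
      have habs : |XPt x j0| = 1 := by
        rw [XPt, mkE_apply]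
        rcases (CBd _ hp0 hp2).mp hj0 with h | h <;> rw [h] <;> norm_num
      refine le_antisymm (rI_XPt_le x) ?_
      rw [← habs]
      exact abs_le_rI _ _
    by_cases hz : zeroV (fun j => canonSeg (posC (x.1.1.2.1 j) (x.2.1 j)))
    · -- both are the wedge point
      have hXneg : XPt x = negOne := by
        unfold XPt negOne mkE
        refine congrArg _ ?_
        funext j
        obtain ⟨hx0, hx1⟩ := cell_bounds x j
        obtain ⟨hp0, hp2⟩ := posC_mem hx0 hx1
        rw [(Czero _ hp0 hp2).mp (hz j)]
        norm_num
      apply Quot.sound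
      right
      constructor
      · show (⟨qval (XPt x) _, _⟩ : Metric.sphere (0 : Euc (k+1)) 1) = pp n k _
        apply Subtype.ext
        show qval (XPt x) _ = qval negOne false
        rw [hXneg]
        exact qval_bdry rI_negOne _ _
      · show (⟨qval (XPt y) _, _⟩ : Metric.sphere (0 : Euc (k+1)) 1) = pp n k _
        apply Subtype.ext
        show qval (XPt y) _ = qval negOne false
        rw [← hXPt, hXneg]
        exact qval_bdry rI_negOne _ _
    · -- same copy, boundary point
      have hcopy : x.1.1.1 = y.1.1.1 := hcs.resolve_left hz
      refine congrArg _ ?_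
      unfold Psi0
      refine Prod.ext hcopy ?_
      apply Subtype.ext
      show qval (XPt x) _ = qval (XPt y) _
      rw [← hXPt]
      exact qval_bdry hr1 _ _
  · -- interior point
    have hz : ¬ zeroV (fun j => canonSeg (posC (x.1.1.2.1 j) (x.2.1 j))) := by
      intro hz
      exact hbd ⟨Classical.arbitrary (Fin k), Or.inl (hz _)⟩
    have hcopy : x.1.1.1 = y.1.1.1 := hcs.resolve_left hz
    have hbool : x.1.1.2.2 = y.1.1.2.2 := hbs.resolve_left hbd
    refine congrArg _ ?_
    unfold Psi0
    refine Prod.ext hcopy ?_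
    apply Subtype.ext
    show qval (XPt x) _ = qval (XPt y) _
    rw [hXPt, hbool]

lemma core_mpr (x y : Cell n k)
    (h : Quot.mk (wedgeRel n k (pp n k)) (Psi0 x) = Quot.mk _ (Psi0 y)) :
    realRel (sphereGraph n k) x y := by
  have hrel : wedgeRel n k (pp n k) (Psi0 x) (Psi0 y) :=
    ((wedge_equiv _).eqvGen_iff).mp (Quot.eq.mp h)
  rcases hrel with heq | ⟨hx, hy⟩
  · -- equal images
    have hcopy : x.1.1.1 = y.1.1.1 := congrArg (fun z => z.1) heq
    have hval : qval (XPt x) x.1.1.2.2 = qval (XPt y) y.1.1.2.2 :=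
      congrArg (fun z => (z.2 : Euc (k+1))) heq
    obtain ⟨hXeq, hOr⟩ := qval_inj (rI_XPt_le x) (rI_XPt_le y) hval
    have hXj : ∀ j, posC (x.1.1.2.1 j) (x.2.1 j) = posC (y.1.1.2.1 j) (y.2.1 j) := fun j => by
      have := congrFun (congrArg (fun (v : Euc k) (j : Fin k) => v j) hXeq) j
      simp only [XPt, mkE_apply] at this
      linarith
    constructor
    · rw [segM x, segM y]
      apply mkM_eq_iff.mpr
      refine ⟨funext fun j => ?_, Or.inr hcopy, ?_⟩
      · show canonSeg (posC (x.1.1.2.1 j) (x.2.1 j)) = canonSeg (posC (y.1.1.2.1 j) (y.2.1 j))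
        rw [hXj j]
      by_cases hbd : bdry (fun j => canonSeg (posC (x.1.1.2.1 j) (x.2.1 j)))
      · exact Or.inl hbd
      · right
        rcases hOr with hr1 | hb
        · exfalso
          have hlt : rI (XPt x) < 1 := by
            rw [rI_lt_iff zero_lt_one]
            intro j
            obtain ⟨hx0, hx1⟩ := cell_bounds x j
            obtain ⟨hp0, hp2⟩ := posC_mem hx0 hx1
            have hnbd : ¬ Bd (canonSeg (posC (x.1.1.2.1 j) (x.2.1 j))) :=
              fun hc => hbd ⟨j, hc⟩
            have := (not_iff_not.mpr (CBd _ hp0 hp2)).mp hnbd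
            push_neg at this
            rw [XPt, mkE_apply, abs_lt]
            constructor
            · rcases lt_or_eq_of_le hp0 with hh | hh
              · linarith
              · exact absurd hh.symm this.1
            · rcases lt_or_eq_of_le hp2 with hh | hh
              · linarith
              · exact absurd hh this.2
          rw [hr1] at hlt
          exact lt_irrefl _ hlt
        · exact hb
    · funext i
      rw [fracM x i, fracM y i, hXj i]
  · -- both wedge points
    have hxv : qval (XPt x) x.1.1.2.2 = qval negOne false := congrArg Subtype.val hx
    have hyv : qval (XPt y) y.1.1.2.2 = qval negOne false := congrArg Subtype.val hy
    have hXx : XPt x = negOne := (qval_inj (rI_XPt_le x) (le_of_eq rI_negOne) hxv).1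
    have hXy : XPt y = negOne := (qval_inj (rI_XPt_le y) (le_of_eq rI_negOne) hyv).1
    have hpx : ∀ j, posC (x.1.1.2.1 j) (x.2.1 j) = 0 := fun j => by
      have := congrFun (congrArg (fun (v : Euc k) (j : Fin k) => v j) hXx) j
      simp only [XPt, mkE_apply, negOne] at this
      linarith
    have hpy : ∀ j, posC (y.1.1.2.1 j) (y.2.1 j) = 0 := fun j => by
      have := congrFun (congrArg (fun (v : Euc k) (j : Fin k) => v j) hXy) j
      simp only [XPt, mkE_apply, negOne] at this
      linarith
    constructor
    · rw [segM x, segM y]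
      apply mkM_eq_iff.mpr
      refine ⟨funext fun j => ?_, ?_, ?_⟩
      · show canonSeg (posC (x.1.1.2.1 j) (x.2.1 j)) = canonSeg (posC (y.1.1.2.1 j) (y.2.1 j))
        rw [hpx j, hpy j]
      · left
        intro j
        show canonSeg (posC (x.1.1.2.1 j) (x.2.1 j)) = s0
        rw [hpx j]
        unfold canonSeg
        rw [if_pos rfl]
      · left
        refine ⟨Classical.arbitrary (Fin k), Or.inl ?_⟩
        show canonSeg (posC (x.1.1.2.1 _) (x.2.1 _)) = s0
        rw [hpx _]
        unfold canonSeg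
        rw [if_pos rfl]
    · funext i
      rw [fracM x i, fracM y i, hpx i, hpy i]

lemma Psi0_surj (z : Fin n × Metric.sphere (0 : Euc (k+1)) 1) :
    ∃ x : Cell n k, Psi0 x = z := by
  classical
  obtain ⟨i, zz⟩ := z
  set zv : Euc (k+1) := (zz : Euc (k+1)) with hzv
  set w : Euc k := mkE (fun j => zv j.castSucc) with hww
  have hnz : ‖zv‖ = 1 := mem_sphere_zero_iff_norm.mp zz.2
  have hsum : ∑ jj : Fin (k+1), zv jj ^ 2 = 1 := by rw [sum_sq_eq, hnz]; norm_num
  have hsplit : ∑ j : Fin k, w j ^ 2 + zv (Fin.last k) ^ 2 = 1 := by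
    rw [← hsum, Fin.sum_univ_castSucc, hww]
    simp only [mkE_apply]
  have hw2 : ‖w‖ ^ 2 = 1 - zv (Fin.last k) ^ 2 := by
    rw [← sum_sq_eq]; linarith
  have hwle : ‖w‖ ≤ 1 := by nlinarith [norm_nonneg w, sq_nonneg (zv (Fin.last k))]
  set v : Euc k := Amap w with hv
  have hrIv : rI v = ‖w‖ := rI_Amap w
  have hvle : ∀ j, |v j| ≤ 1 := fun j => le_trans (abs_le_rI v j) (by rw [hrIv]; exact hwle)
  set tf : Fin k → TT := fun j => if v j ≤ 0 then e0 else e2 with htf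
  set bb : Bool := decide (zv (Fin.last k) < 0) with hbb
  have hlz : ¬ zeroV tf := by
    intro hz
    have h := hz (Classical.arbitrary (Fin k))
    rw [htf] at h
    simp only [] at h
    split_ifs at h <;> exact absurd h (by decide)
  have hlb : ¬ bdry tf := by
    rintro ⟨j, hj⟩
    rw [htf] at hj
    simp only [] at hj
    split_ifs at hj <;> exact absurd hj (by decide)
  set lam : MM n k := mkM (i, tf, bb) with hlam
  have hc1 : lam.1.1 = i := by
    rw [hlam]; show (norm (i, tf, bb)).1 = i; unfold norm; simp [if_neg hlz]
  have hc2 : lam.1.2.1 = tf := rfl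
  have hc3 : lam.1.2.2 = bb := by
    rw [hlam]; show (norm (i, tf, bb)).2.2 = bb; unfold norm; simp [if_neg hlb]
  set u : Fin k → ℝ := fun j => if v j ≤ 0 then v j + 1 else 1 - v j with hu
  have hum : u ∈ cube k ((sphereGraph n k).d lam) := by
    rw [cube]
    rw [Set.mem_Icc]
    constructor
    · intro j
      have := hvle j
      rw [abs_le] at this
      show (0:ℝ) ≤ u j
      rw [hu]
      simp only []
      split_ifs <;> linarith
    · intro j
      have := hvle j
      rw [abs_le] at this
      show u j ≤ ((sphereGraph n k).d lam j : ℝ)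
      have hdg : (sphereGraph n k).d lam j = degT (tf j) := by rw [← hc2]; rfl
      have hdg1 : degT (tf j) = 1 := by
        rw [htf]; simp only []; split_ifs <;> rfl
      rw [hdg, hdg1, hu]
      simp only []
      split_ifs <;> norm_num <;> linarith
  refine ⟨⟨lam, ⟨u, hum⟩⟩, ?_⟩
  have hXv : XPt ⟨lam, ⟨u, hum⟩⟩ = v := by
    unfold XPt
    ext j
    rw [mkE_apply]
    show posC (lam.1.2.1 j) (u j) - 1 = v j
    rw [hc2, htf, hu]
    simp only []
    split_ifs with h
    · rw [show posC e0 (v j + 1) = v j + 1 from rfl]; ring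
    · rw [show posC e2 (1 - v j) = 2 - (1 - v j) from rfl]; ring
  unfold Psi0
  refine Prod.ext ?_ ?_
  · exact hc1
  · apply Subtype.ext
    show qval (XPt ⟨lam, ⟨u, hum⟩⟩) lam.1.2.2 = zv
    rw [hXv, hc3]
    ext jj
    refine Fin.lastCases ?_ ?_ jj
    · rw [qval_last]
      rw [show rI v = ‖w‖ from hrIv]
      have hs : Real.sqrt (1 - ‖w‖ ^ 2) = |zv (Fin.last k)| := by
        rw [hw2, show (1:ℝ) - (1 - zv (Fin.last k) ^ 2) = zv (Fin.last k) ^ 2 by ring,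
          Real.sqrt_sq_eq_abs]
      rw [hs, hbb]
      by_cases hneg : zv (Fin.last k) < 0
      · simp [hneg, abs_of_neg hneg]
      · simp [hneg, abs_of_nonneg (not_lt.mp hneg)]
    · intro j
      rw [qval_castSucc, hv, Bmap_Amap]
      rw [hww, mkE_apply]

variable (n k) [NeZero n] [NeZero k]

noncomputable def PsiQ : Realisation (sphereGraph n k) → Quot (wedgeRel n k (pp n k)) :=
  Quotient.lift (fun x : Cell n k => Quot.mk _ (Psi0 x)) (fun a b hab => core_mp a b hab)

lemma PsiQ_bij : Function.Bijective (PsiQ n k) := by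
  constructor
  · intro a b
    refine Quotient.inductionOn₂ a b ?_
    intro x y h
    exact Quotient.sound (core_mpr x y h)
  · intro q
    obtain ⟨z, rfl⟩ := Quot.exists_rep q
    obtain ⟨x, hx⟩ := Psi0_surj z
    exact ⟨Quotient.mk _ x, by rw [show PsiQ n k (Quotient.mk _ x) = Quot.mk _ (Psi0 x) from rfl, hx]⟩

lemma posC_cont (t : TT) : Continuous (posC t) := by
  cases t
  · exact continuous_const
  · exact continuous_const
  · exact continuous_const
  · exact continuous_id
  · exact continuous_const.sub continuous_id

lemma qval_cont (e : Bool) : Continuous (fun v : Euc k => qval v e) := by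
  unfold qval mkE
  apply Continuous.comp (PiLp.continuous_toLp 2 (fun _ : Fin (k+1) => ℝ))
  apply continuous_pi
  intro i
  refine Fin.lastCases ?_ ?_ i
  · simp only [Fin.snoc_last]
    exact continuous_const.mul
      (Real.continuous_sqrt.comp (continuous_const.sub (rI_cont.pow 2)))
  · intro j
    simp only [Fin.snoc_castSucc]
    exact (continuous_apply j).comp
      ((PiLp.continuous_ofLp 2 (fun _ : Fin k => ℝ)).comp Bmap_cont)

lemma Psi0_cont : Continuous (Psi0 (n := n) (k := k)) := by
  apply continuous_sigma
  intro lam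
  unfold Psi0
  have hX : Continuous fun u : ↥(cube k ((sphereGraph n k).d lam)) => XPt ⟨lam, u⟩ := by
    unfold XPt mkE
    apply Continuous.comp (PiLp.continuous_toLp 2 (fun _ : Fin k => ℝ))
    apply continuous_pi
    intro j
    have hev : Continuous fun u : ↥(cube k ((sphereGraph n k).d lam)) => u.1 j :=
      (continuous_apply j).comp continuous_subtype_val
    have h1 : Continuous fun u : ↥(cube k ((sphereGraph n k).d lam)) =>
        posC (lam.1.2.1 j) (u.1 j) := (posC_cont (lam.1.2.1 j)).comp hev
    exact h1.sub continuous_const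
  have h2 : Continuous fun u : ↥(cube k ((sphereGraph n k).d lam)) =>
      qval (XPt ⟨lam, u⟩) lam.1.2.2 := (qval_cont k lam.1.2.2).comp hX
  have h3 := Continuous.subtype_mk h2
    (fun u => mem_sphere_zero_iff_norm.mpr (norm_qval (rI_XPt_le ⟨lam, u⟩) _))
  show Continuous fun u : ↥(cube k ((sphereGraph n k).d lam)) =>
    ((lam.1.1, ⟨qval (XPt ⟨lam, u⟩) lam.1.2.2,
      mem_sphere_zero_iff_norm.mpr (norm_qval (rI_XPt_le ⟨lam, u⟩) _)⟩) :
      Fin n × ↥(Metric.sphere (0 : Euc (k+1)) 1))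
  exact Continuous.prodMk continuous_const h3

lemma PsiQ_cont : Continuous (PsiQ n k) :=
  Continuous.quotient_lift (continuous_quot_mk.comp (Psi0_cont n k)) _

instance cellCompact : CompactSpace (Cell n k) := by
  haveI : ∀ lam : MM n k, CompactSpace ↥(cube k ((sphereGraph n k).d lam)) := fun lam =>
    isCompact_iff_compactSpace.mp isCompact_Icc
  infer_instance

instance realisationCompact : CompactSpace (Realisation (sphereGraph n k)) := by
  constructor
  have h1 : (Set.univ : Set (Realisation (sphereGraph n k)))
      = Quotient.mk (realSetoid (sphereGraph n k)) '' Set.univ := by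
    rw [Set.image_univ]
    exact (Set.range_eq_univ.mpr (fun q => Quot.exists_rep q)).symm
  rw [h1]
  exact IsCompact.image isCompact_univ continuous_quot_mk

noncomputable def jmap : Quot (wedgeRel n k (pp n k)) → (Fin n → Euc (k+1)) :=
  Quot.lift
    (fun z => fun i => if i = z.1 then (z.2 : Euc (k+1)) - ((pp n k z.1 : _) : Euc (k+1)) else 0)
    (by
      rintro a b (rfl | ⟨h1, h2⟩)
      · rfl
      · funext i
        have e1 : ((a.2 : _) : Euc (k+1)) - ((pp n k a.1 : _) : Euc (k+1)) = 0 := by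
          rw [h1]; exact sub_self _
        have e2 : ((b.2 : _) : Euc (k+1)) - ((pp n k b.1 : _) : Euc (k+1)) = 0 := by
          rw [h2]; exact sub_self _
        split_ifs <;> simp [e1, e2])

lemma jmap_inj : Function.Injective (jmap n k) := by
  intro q1 q2
  refine Quot.inductionOn q1 fun a => Quot.inductionOn q2 fun b => ?_
  intro h
  apply Quot.sound
  have ha1 : (if a.1 = a.1 then ((a.2 : _) : Euc (k+1)) - ((pp n k a.1 : _) : Euc (k+1)) else 0)
      = (if a.1 = b.1 then ((b.2 : _) : Euc (k+1)) - ((pp n k b.1 : _) : Euc (k+1)) else 0) :=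
    congrFun h a.1
  rw [if_pos rfl] at ha1
  by_cases hz : ((a.2 : _) : Euc (k+1)) - ((pp n k a.1 : _) : Euc (k+1)) = 0
  · right
    have hb1 : (if b.1 = a.1 then ((a.2 : _) : Euc (k+1)) - ((pp n k a.1 : _) : Euc (k+1)) else 0)
        = (if b.1 = b.1 then ((b.2 : _) : Euc (k+1)) - ((pp n k b.1 : _) : Euc (k+1)) else 0) :=
      congrFun h b.1
    rw [if_pos rfl] at hb1
    refine ⟨Subtype.ext (sub_eq_zero.mp hz), Subtype.ext (sub_eq_zero.mp ?_)⟩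
    rw [← hb1]
    split_ifs
    · exact hz
    · rfl
  · left
    by_cases hab : a.1 = b.1
    · rw [if_pos hab] at ha1
      refine Prod.ext hab (Subtype.ext ?_)
      have hp : ((pp n k a.1 : _) : Euc (k+1)) = ((pp n k b.1 : _) : Euc (k+1)) := by rw [hab]
      rw [hp] at ha1
      exact sub_left_inj.mp ha1
    · rw [if_neg hab] at ha1
      exact absurd ha1 hz

instance wedgeT2 : T2Space (Quot (wedgeRel n k (pp n k))) := by
  apply T2Space.of_injective_continuous (jmap_inj n k)
  apply continuous_quot_lift
  apply continuous_pi
  intro i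
  have hclopen : IsClopen {z : Fin n × Metric.sphere (0 : Euc (k+1)) 1 | i = z.1} :=
    (isClopen_discrete {y : Fin n | i = y}).preimage continuous_fst
  apply Continuous.if
  · intro a ha
    rw [hclopen.frontier_eq] at ha
    exact absurd ha (Set.notMem_empty a)
  · refine Continuous.sub (continuous_subtype_val.comp continuous_snd) ?_
    exact continuous_const
  · exact continuous_const

end Core

end Wedge

/-- for each `n ≥ 1` and `k ≥ 1` there is a finite `k`-graph whose topological
realisation is homeomorphic to a wedge of `n` `k`-spheres. -/
theorem wedge_of_spheres_realised (n k : ℕ) (hn : 1 ≤ n) (hk : 1 ≤ k) :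
    ∃ (M : Type) (S : KGraphOn k M)
      (p : Fin n → Metric.sphere (0 : EuclideanSpace ℝ (Fin (k + 1))) 1),
      Finite M ∧ Nonempty (Realisation S ≃ₜ Quot (wedgeRel n k p)) := by
  haveI : NeZero n := ⟨by omega⟩
  haveI : NeZero k := ⟨by omega⟩
  refine ⟨Wedge.MM n k, Wedge.sphereGraph n k, Wedge.pp n k, inferInstance, ?_⟩
  exact ⟨Continuous.homeoOfEquivCompactToT2
    (f := Equiv.ofBijective _ (Wedge.PsiQ_bij n k)) (Wedge.PsiQ_cont n k)⟩
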